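/- Let W : F_q → O be a DMC, G an l×l non-singular matrix over F_q, and for n ≥ 1 let W_n be the channel on F_q^{l^n} defined by W_n(y₁^N | u₁^N) = Π_{k=1}^N W(y_k | (u G_n)_k) with G_n = B_n G^{⊗n} (B_n the bit-reversal permutation) and split channels W_n^{(i)}. Then for 1 ≤ i ≤ l^{n−1} and 1 ≤ j ≤ l, the channel (W_{n−1}^{(i)})₁^{(j)} (one polarization step with kernel G applied to W_{n−1}^{(i)}) is equivalent to W_n^{((i−1)l+j)}: there is a bijection between output alphabets carrying one transition kernel to the other, so I and Z coincide. -/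

import Mathlib

/-- The `k`-th base-`l` digit of `i : Fin (l^n)`. -/
def digitF (l n : ℕ) [NeZero l] (i : Fin (l ^ n)) (k : Fin n) : Fin l :=
  ⟨(i.val / l ^ (k : ℕ)) % l, Nat.mod_lt _ (Nat.pos_of_ne_zero (NeZero.ne l))⟩

/-- The polarization matrix `G_n = B_n G^{⊗n}` (bit-reversal times Kronecker power):
`(G_n)_{i,j} = Π_k G_{d_{n−1−k}(i), d_k(j)}` where `d_k` is the `k`-th base-`l` digit. -/
def GnMat {Fq : Type*} [Field Fq] {l : ℕ} [NeZero l]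
    (G : Matrix (Fin l) (Fin l) Fq) (n : ℕ) :
    Matrix (Fin (l ^ n)) (Fin (l ^ n)) Fq :=
  fun u v => ∏ k : Fin n, G (digitF l n u k.rev) (digitF l n v k)

open scoped Classical in
/-- The `i`-th split channel of one polarization step with an `N × N` kernel `M`. -/
noncomputable def splitCh {Fq O : Type*} [Field Fq] [Fintype Fq] {N : ℕ}
    (W : Fq → O → ℝ) (M : Matrix (Fin N) (Fin N) Fq) (i : Fin N) :
    Fq → ((Fin N → O) × (Fin i → Fq)) → ℝ :=
  fun ui yu =>
    (1 / (Fintype.card Fq : ℝ) ^ (N - 1)) *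
      ∑ u : Fin N → Fq,
        if u i = ui ∧ ∀ j : Fin i, u (Fin.castLE i.isLt.le j) = yu.2 j then
          ∏ k, W (∑ r, u r * M r k) (yu.1 k)
        else 0

namespace PolarRec

set_option linter.unusedSectionVars false

variable {l : ℕ} [NeZero l]

theorem lpos (l : ℕ) [NeZero l] : 0 < l := Nat.pos_of_ne_zero (NeZero.ne l)

/-- `a*l + b` as an element of `Fin (l^(n+1))`. -/
def mkIdx {n : ℕ} (a : Fin (l ^ n)) (b : Fin l) : Fin (l ^ (n + 1)) :=
  ⟨a.val * l + b.val, by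
    have hb := b.isLt
    have ha := a.isLt
    have h1 : a.val * l + b.val < (a.val + 1) * l := by nlinarith
    have h2 : (a.val + 1) * l ≤ l ^ n * l := Nat.mul_le_mul_right _ ha
    rw [pow_succ]; omega⟩

/-- `m*l^n + K'` as an element of `Fin (l^(n+1))`. -/
def mkOut {n : ℕ} (m : Fin l) (K' : Fin (l ^ n)) : Fin (l ^ (n + 1)) :=
  ⟨m.val * l ^ n + K'.val, by
    have hb := K'.isLt
    have ha := m.isLt
    have h1 : m.val * l ^ n + K'.val < (m.val + 1) * l ^ n := by nlinarith
    have h2 : (m.val + 1) * l ^ n ≤ l * l ^ n := Nat.mul_le_mul_right _ ha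
    rw [pow_succ']; omega⟩

theorem mkIdx_val {n : ℕ} (a : Fin (l ^ n)) (b : Fin l) :
    (mkIdx a b).val = a.val * l + b.val := rfl

theorem mkOut_val {n : ℕ} (m : Fin l) (K' : Fin (l ^ n)) :
    (mkOut m K').val = m.val * l ^ n + K'.val := rfl

theorem mkIdx_div {n : ℕ} (a : Fin (l ^ n)) (b : Fin l) :
    (mkIdx a b).val / l = a.val := by
  rw [mkIdx_val, Nat.add_comm, Nat.add_mul_div_right _ _ (lpos l),
    Nat.div_eq_of_lt b.isLt, Nat.zero_add]

theorem mkIdx_mod {n : ℕ} (a : Fin (l ^ n)) (b : Fin l) :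
    (mkIdx a b).val % l = b.val := by
  rw [mkIdx_val, Nat.add_comm, Nat.add_mul_mod_self_right, Nat.mod_eq_of_lt b.isLt]

theorem mkOut_div {n : ℕ} (m : Fin l) (K' : Fin (l ^ n)) :
    (mkOut m K').val / l ^ n = m.val := by
  have : 0 < l ^ n := pow_pos (lpos l) n
  rw [mkOut_val, Nat.add_comm, Nat.add_mul_div_right _ _ this,
    Nat.div_eq_of_lt K'.isLt, Nat.zero_add]

theorem mkOut_mod {n : ℕ} (m : Fin l) (K' : Fin (l ^ n)) :
    (mkOut m K').val % l ^ n = K'.val := by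
  rw [mkOut_val, Nat.add_comm, Nat.add_mul_mod_self_right, Nat.mod_eq_of_lt K'.isLt]

/-- high part of `R : Fin (l^(n+1))` -/
def hiIdx {n : ℕ} (R : Fin (l ^ (n + 1))) : Fin (l ^ n) :=
  ⟨R.val / l, by
    rw [Nat.div_lt_iff_lt_mul (lpos l), ← pow_succ]
    exact R.isLt⟩

def loIdx {n : ℕ} (R : Fin (l ^ (n + 1))) : Fin l :=
  ⟨R.val % l, Nat.mod_lt _ (lpos l)⟩

theorem mkIdx_hi_lo {n : ℕ} (R : Fin (l ^ (n + 1))) : mkIdx (hiIdx R) (loIdx R) = R := by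
  apply Fin.ext
  rw [mkIdx_val]
  show R.val / l * l + R.val % l = R.val
  have := Nat.div_add_mod R.val l
  rw [Nat.mul_comm] at this
  omega


theorem hiIdx_mkIdx {n : ℕ} (a : Fin (l ^ n)) (b : Fin l) : hiIdx (mkIdx a b) = a :=
  Fin.ext (mkIdx_div a b)

theorem loIdx_mkIdx {n : ℕ} (a : Fin (l ^ n)) (b : Fin l) : loIdx (mkIdx a b) = b :=
  Fin.ext (mkIdx_mod a b)

/-- `Fin (l^(n+1)) ≃ Fin (l^n) × Fin l`, `R ↦ (R / l, R % l)`. -/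
def idxEquiv (l : ℕ) [NeZero l] (n : ℕ) : Fin (l ^ (n + 1)) ≃ Fin (l ^ n) × Fin l where
  toFun R := (hiIdx R, loIdx R)
  invFun p := mkIdx p.1 p.2
  left_inv R := mkIdx_hi_lo R
  right_inv p := by
    obtain ⟨a, b⟩ := p
    exact Prod.ext (hiIdx_mkIdx a b) (loIdx_mkIdx a b)

def hiOut {n : ℕ} (K : Fin (l ^ (n + 1))) : Fin l :=
  ⟨K.val / l ^ n, by
    rw [Nat.div_lt_iff_lt_mul (pow_pos (lpos l) n), Nat.mul_comm, ← pow_succ]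
    exact K.isLt⟩

def loOut {n : ℕ} (K : Fin (l ^ (n + 1))) : Fin (l ^ n) :=
  ⟨K.val % l ^ n, Nat.mod_lt _ (pow_pos (lpos l) n)⟩

theorem mkOut_hi_lo {n : ℕ} (K : Fin (l ^ (n + 1))) : mkOut (hiOut K) (loOut K) = K := by
  apply Fin.ext
  rw [mkOut_val]
  show K.val / l ^ n * l ^ n + K.val % l ^ n = K.val
  have := Nat.div_add_mod K.val (l ^ n)
  rw [Nat.mul_comm] at this
  omega

theorem hiOut_mkOut {n : ℕ} (m : Fin l) (K' : Fin (l ^ n)) : hiOut (mkOut m K') = m :=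
  Fin.ext (mkOut_div m K')

theorem loOut_mkOut {n : ℕ} (m : Fin l) (K' : Fin (l ^ n)) : loOut (mkOut m K') = K' :=
  Fin.ext (mkOut_mod m K')

/-- `Fin (l^(n+1)) ≃ Fin l × Fin (l^n)`, `K ↦ (K / l^n, K % l^n)`. -/
def outEquiv (l : ℕ) [NeZero l] (n : ℕ) : Fin (l ^ (n + 1)) ≃ Fin l × Fin (l ^ n) where
  toFun K := (hiOut K, loOut K)
  invFun p := mkOut p.1 p.2
  left_inv K := mkOut_hi_lo K
  right_inv p := by
    obtain ⟨m, K'⟩ := p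
    exact Prod.ext (hiOut_mkOut m K') (loOut_mkOut m K')


section GnMatRec

variable {Fq : Type*} [Field Fq]

theorem digitF_mkIdx_rev_castSucc {n : ℕ} (a : Fin (l ^ n)) (b : Fin l) (t : Fin n) :
    digitF l (n + 1) (mkIdx a b) (Fin.castSucc t).rev = digitF l n a t.rev := by
  rw [Fin.rev_castSucc]
  apply Fin.ext
  show (mkIdx a b).val / l ^ ((t.rev.succ : Fin (n + 1)) : ℕ) % l
      = a.val / l ^ ((t.rev : Fin n) : ℕ) % l
  rw [Fin.val_succ]
  have h : l ^ ((t.rev : ℕ) + 1) = l * l ^ (t.rev : ℕ) := pow_succ' l _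
  rw [h, ← Nat.div_div_eq_div_mul, mkIdx_div]

theorem digitF_mkOut_castSucc {n : ℕ} (m : Fin l) (K' : Fin (l ^ n)) (t : Fin n) :
    digitF l (n + 1) (mkOut m K') (Fin.castSucc t) = digitF l n K' t := by
  apply Fin.ext
  show (m.val * l ^ n + K'.val) / l ^ ((t : Fin n) : ℕ) % l
      = K'.val / l ^ ((t : Fin n) : ℕ) % l
  have ht : (t : ℕ) < n := t.isLt
  have h1 : m.val * l ^ n = m.val * l ^ (n - (t : ℕ)) * l ^ (t : ℕ) := by
    rw [Nat.mul_assoc, ← pow_add]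
    congr 2
    omega
  rw [h1, Nat.add_comm, Nat.add_mul_div_right _ _ (pow_pos (lpos l) _)]
  have h2 : m.val * l ^ (n - (t : ℕ)) = m.val * l ^ (n - (t : ℕ) - 1) * l := by
    rw [Nat.mul_assoc, ← pow_succ]
    congr 2
    omega
  rw [h2, Nat.add_mul_mod_self_right]

theorem digitF_mkIdx_rev_last {n : ℕ} (a : Fin (l ^ n)) (b : Fin l) :
    digitF l (n + 1) (mkIdx a b) (Fin.last n).rev = b := by
  rw [Fin.rev_last]
  apply Fin.ext
  show (mkIdx a b).val / l ^ ((0 : Fin (n + 1)) : ℕ) % l = b.val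
  rw [Fin.val_zero, pow_zero, Nat.div_one]
  exact mkIdx_mod a b

theorem digitF_mkOut_last {n : ℕ} (m : Fin l) (K' : Fin (l ^ n)) :
    digitF l (n + 1) (mkOut m K') (Fin.last n) = m := by
  apply Fin.ext
  show (mkOut m K').val / l ^ ((Fin.last n : Fin (n + 1)) : ℕ) % l = m.val
  rw [Fin.val_last, mkOut_div, Nat.mod_eq_of_lt m.isLt]

theorem GnMat_succ (G : Matrix (Fin l) (Fin l) Fq) {n : ℕ}
    (a : Fin (l ^ n)) (b : Fin l) (m : Fin l) (K' : Fin (l ^ n)) :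
    GnMat G (n + 1) (mkIdx a b) (mkOut m K') = GnMat G n a K' * G b m := by
  unfold GnMat
  rw [Fin.prod_univ_castSucc]
  congr 1
  · exact Finset.prod_congr rfl fun t _ => by
      rw [digitF_mkIdx_rev_castSucc, digitF_mkOut_castSucc]
  · rw [digitF_mkIdx_rev_last, digitF_mkOut_last]

end GnMatRec

section VecMul

variable {Fq : Type*} [Field Fq] [Fintype Fq]

theorem vecMul_cancel_right {G : Matrix (Fin l) (Fin l) Fq} (hG : IsUnit G.det)
    (x : Fin l → Fq) : Matrix.vecMul (Matrix.vecMul x G) G⁻¹ = x := by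
  rw [Matrix.vecMul_vecMul, Matrix.mul_nonsing_inv _ hG, Matrix.vecMul_one]

theorem vecMul_cancel_left {G : Matrix (Fin l) (Fin l) Fq} (hG : IsUnit G.det)
    (x : Fin l → Fq) : Matrix.vecMul (Matrix.vecMul x G⁻¹) G = x := by
  rw [Matrix.vecMul_vecMul, Matrix.nonsing_inv_mul _ hG, Matrix.vecMul_one]

theorem vecMul_inj {G : Matrix (Fin l) (Fin l) Fq} (hG : IsUnit G.det)
    {x y : Fin l → Fq} (h : Matrix.vecMul x G = Matrix.vecMul y G) : x = y := by
  have := congrArg (fun z => Matrix.vecMul z G⁻¹) h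
  simpa [vecMul_cancel_right hG] using this

/-- The input re-coordinatization `U ↦ (u_m)_m`, `u_m a = ((U_{al+·}) G)_m`. -/
noncomputable def psiEquiv {n : ℕ} (G : Matrix (Fin l) (Fin l) Fq) (hG : IsUnit G.det) :
    (Fin (l ^ (n + 1)) → Fq) ≃ (Fin l → Fin (l ^ n) → Fq) where
  toFun U := fun m a => Matrix.vecMul (fun b => U (mkIdx a b)) G m
  invFun u := fun R => Matrix.vecMul (fun m => u m (hiIdx R)) G⁻¹ (loIdx R)
  left_inv U := by
    funext R
    show Matrix.vecMul (fun m => Matrix.vecMul (fun b => U (mkIdx (hiIdx R) b)) G m)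
        G⁻¹ (loIdx R) = U R
    have : (fun m => Matrix.vecMul (fun b => U (mkIdx (hiIdx R) b)) G m)
        = Matrix.vecMul (fun b => U (mkIdx (hiIdx R) b)) G := rfl
    rw [this, vecMul_cancel_right hG]
    exact congrArg U (mkIdx_hi_lo R)
  right_inv u := by
    funext m a
    show Matrix.vecMul
        (fun b => Matrix.vecMul (fun m' => u m' (hiIdx (mkIdx a b))) G⁻¹ (loIdx (mkIdx a b)))
        G m = u m a
    have h1 : (fun b => Matrix.vecMul (fun m' => u m' (hiIdx (mkIdx a b))) G⁻¹ (loIdx (mkIdx a b)))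
        = Matrix.vecMul (fun m' => u m' a) G⁻¹ := by
      funext b
      rw [hiIdx_mkIdx, loIdx_mkIdx]
    rw [h1, vecMul_cancel_left hG]

theorem vecMul_GnMat_succ {n : ℕ} (G : Matrix (Fin l) (Fin l) Fq)
    (U : Fin (l ^ (n + 1)) → Fq) (m : Fin l) (K' : Fin (l ^ n)) :
    Matrix.vecMul U (GnMat G (n + 1)) (mkOut m K')
      = Matrix.vecMul (fun a => Matrix.vecMul (fun b => U (mkIdx a b)) G m)
          (GnMat G n) K' := by
  show ∑ R, U R * GnMat G (n + 1) R (mkOut m K')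
      = ∑ a, (∑ b, U (mkIdx a b) * G b m) * GnMat G n a K'
  rw [← Equiv.sum_comp (idxEquiv l n).symm
    (fun R => U R * GnMat G (n + 1) R (mkOut m K')), Fintype.sum_prod_type]
  refine Finset.sum_congr rfl fun a _ => ?_
  rw [Finset.sum_mul]
  refine Finset.sum_congr rfl fun b _ => ?_
  show U (mkIdx a b) * GnMat G (n + 1) (mkIdx a b) (mkOut m K') = _
  rw [GnMat_succ]
  ring

end VecMul

section OutE

variable {Fq O : Type*} [Field Fq] [Fintype Fq]

/-- `a*l + b` as an element of `Fin k`, `k = i*l + j`, for `a < i`. -/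
def kIdx {n : ℕ} {i : Fin (l ^ n)} {j : Fin l} {k : Fin (l ^ (n + 1))}
    (hk : (k : ℕ) = (i : ℕ) * l + (j : ℕ)) (a : Fin (i : ℕ)) (b : Fin l) : Fin (k : ℕ) :=
  ⟨a.val * l + b.val, by
    rw [hk]
    have h1 : (a.val + 1) * l ≤ (i : ℕ) * l := Nat.mul_le_mul_right _ a.isLt
    have h2 : a.val * l + b.val < (a.val + 1) * l := by have := b.isLt; nlinarith
    exact lt_of_lt_of_le h2 (le_trans h1 (Nat.le_add_right _ _))⟩

/-- `i*l + j'` as an element of `Fin k`, for `j' < j`. -/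
def kTop {n : ℕ} {i : Fin (l ^ n)} {j : Fin l} {k : Fin (l ^ (n + 1))}
    (hk : (k : ℕ) = (i : ℕ) * l + (j : ℕ)) (j' : Fin (j : ℕ)) : Fin (k : ℕ) :=
  ⟨(i : ℕ) * l + j'.val, by rw [hk]; exact Nat.add_lt_add_left j'.isLt _⟩

theorem kIdx_val {n : ℕ} {i : Fin (l ^ n)} {j : Fin l} {k : Fin (l ^ (n + 1))}
    (hk : (k : ℕ) = (i : ℕ) * l + (j : ℕ)) (a : Fin (i : ℕ)) (b : Fin l) :
    (kIdx hk a b).val = a.val * l + b.val := rfl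

theorem kIdx_div {n : ℕ} {i : Fin (l ^ n)} {j : Fin l} {k : Fin (l ^ (n + 1))}
    (hk : (k : ℕ) = (i : ℕ) * l + (j : ℕ)) (a : Fin (i : ℕ)) (b : Fin l) :
    (kIdx hk a b).val / l = a.val := by
  rw [kIdx_val, Nat.add_comm, Nat.add_mul_div_right _ _ (lpos l),
    Nat.div_eq_of_lt b.isLt, Nat.zero_add]

theorem kIdx_mod {n : ℕ} {i : Fin (l ^ n)} {j : Fin l} {k : Fin (l ^ (n + 1))}
    (hk : (k : ℕ) = (i : ℕ) * l + (j : ℕ)) (a : Fin (i : ℕ)) (b : Fin l) :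
    (kIdx hk a b).val % l = b.val := by
  rw [kIdx_val, Nat.add_comm, Nat.add_mul_mod_self_right, Nat.mod_eq_of_lt b.isLt]

theorem kTop_val {n : ℕ} {i : Fin (l ^ n)} {j : Fin l} {k : Fin (l ^ (n + 1))}
    (hk : (k : ℕ) = (i : ℕ) * l + (j : ℕ)) (j' : Fin (j : ℕ)) :
    (kTop hk j').val = (i : ℕ) * l + j'.val := rfl

theorem kTop_div {n : ℕ} {i : Fin (l ^ n)} {j : Fin l} {k : Fin (l ^ (n + 1))}
    (hk : (k : ℕ) = (i : ℕ) * l + (j : ℕ)) (j' : Fin (j : ℕ)) :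
    (kTop hk j').val / l = (i : ℕ) := by
  have hj' : j'.val < l := lt_trans j'.isLt j.isLt
  rw [kTop_val, Nat.add_comm, Nat.add_mul_div_right _ _ (lpos l),
    Nat.div_eq_of_lt hj', Nat.zero_add]

theorem kTop_mod {n : ℕ} {i : Fin (l ^ n)} {j : Fin l} {k : Fin (l ^ (n + 1))}
    (hk : (k : ℕ) = (i : ℕ) * l + (j : ℕ)) (j' : Fin (j : ℕ)) :
    (kTop hk j').val % l = j'.val := by
  have hj' : j'.val < l := lt_trans j'.isLt j.isLt
  rw [kTop_val, Nat.add_comm, Nat.add_mul_mod_self_right, Nat.mod_eq_of_lt hj']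

/-- For `R < k = i*l + j` with `i ≤ R/l`, in fact `R/l = i` and `R%l < j`. -/
theorem div_mod_top {n : ℕ} {i : Fin (l ^ n)} {j : Fin l} {k : Fin (l ^ (n + 1))}
    (hk : (k : ℕ) = (i : ℕ) * l + (j : ℕ)) (R : Fin (k : ℕ))
    (h : ¬ R.val / l < (i : ℕ)) : R.val / l = (i : ℕ) ∧ R.val % l < (j : ℕ) := by
  have hR : R.val < (i : ℕ) * l + (j : ℕ) := hk ▸ R.isLt
  have hlt : R.val < ((i : ℕ) + 1) * l := by
    have e : ((i : ℕ) + 1) * l = (i : ℕ) * l + l := by ring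
    have := j.isLt
    omega
  have h2 : R.val / l < (i : ℕ) + 1 := (Nat.div_lt_iff_lt_mul (lpos l)).mpr hlt
  have h3 : R.val / l = (i : ℕ) := by omega
  have hd := Nat.div_add_mod R.val l
  rw [h3, Nat.mul_comm] at hd
  refine ⟨h3, ?_⟩
  have h4 : (i : ℕ) * l + R.val % l < (i : ℕ) * l + (j : ℕ) := by rw [hd]; exact hR
  exact lt_of_add_lt_add_left h4

open scoped Classical in
/-- The output-alphabet bijection. -/
noncomputable def outE (O : Type*) {n : ℕ} (G : Matrix (Fin l) (Fin l) Fq) (hG : IsUnit G.det)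
    {i : Fin (l ^ n)} {j : Fin l} {k : Fin (l ^ (n + 1))}
    (hk : (k : ℕ) = (i : ℕ) * l + (j : ℕ)) :
    ((Fin (l ^ (n + 1)) → O) × (Fin (k : ℕ) → Fq)) ≃
      ((Fin l → ((Fin (l ^ n) → O) × (Fin (i : ℕ) → Fq))) × (Fin (j : ℕ) → Fq)) where
  toFun o :=
    (fun m => (fun K' => o.1 (mkOut m K'),
        fun a => Matrix.vecMul (fun b => o.2 (kIdx hk a b)) G m),
      fun j' => o.2 (kTop hk j'))
  invFun z :=
    (fun K => (z.1 (hiOut K)).1 (loOut K),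
      fun R =>
        if h : R.val / l < (i : ℕ) then
          Matrix.vecMul (fun m => (z.1 m).2 ⟨R.val / l, h⟩) G⁻¹ ⟨R.val % l, Nat.mod_lt _ (lpos l)⟩
        else z.2 ⟨R.val % l, (div_mod_top hk R h).2⟩)
  left_inv o := by
    obtain ⟨y, p⟩ := o
    refine Prod.ext ?_ ?_
    · funext K
      show y (mkOut (hiOut K) (loOut K)) = y K
      exact congrArg y (mkOut_hi_lo K)
    · funext R
      show dite _ _ _ = p R
      by_cases h : R.val / l < (i : ℕ)
      · rw [dif_pos h]
        have e1 : (fun m => Matrix.vecMul (fun b => p (kIdx hk ⟨R.val / l, h⟩ b)) G m)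
            = Matrix.vecMul (fun b => p (kIdx hk ⟨R.val / l, h⟩ b)) G := rfl
        show Matrix.vecMul (fun m => Matrix.vecMul
            (fun b => p (kIdx hk ⟨R.val / l, h⟩ b)) G m) G⁻¹ ⟨R.val % l, _⟩ = p R
        rw [e1, vecMul_cancel_right hG]
        refine congrArg p (Fin.ext ?_)
        show R.val / l * l + R.val % l = R.val
        have := Nat.div_add_mod R.val l
        rw [Nat.mul_comm] at this
        omega
      · rw [dif_neg h]
        refine congrArg p (Fin.ext ?_)
        show (i : ℕ) * l + R.val % l = R.val
        have h3 := (div_mod_top hk R h).1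
        have := Nat.div_add_mod R.val l
        rw [h3, Nat.mul_comm] at this
        omega
  right_inv z := by
    obtain ⟨ys, vs⟩ := z
    refine Prod.ext ?_ ?_
    · funext m
      refine Prod.ext ?_ ?_
      · funext K'
        show (ys (hiOut (mkOut m K'))).1 (loOut (mkOut m K')) = (ys m).1 K'
        rw [hiOut_mkOut, loOut_mkOut]
      · funext a
        show Matrix.vecMul (fun b => dite _ _ _) G m = (ys m).2 a
        have hdiv : ∀ b : Fin l, (kIdx hk a b).val / l = a.val := kIdx_div hk a
        have e1 : (fun b : Fin l =>
            if h : (kIdx hk a b).val / l < (i : ℕ) then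
              Matrix.vecMul (fun m' => (ys m').2 ⟨(kIdx hk a b).val / l, h⟩) G⁻¹
                ⟨(kIdx hk a b).val % l, Nat.mod_lt _ (lpos l)⟩
            else vs ⟨(kIdx hk a b).val % l, (div_mod_top hk (kIdx hk a b) h).2⟩)
            = fun b : Fin l => Matrix.vecMul (fun m' => (ys m').2 a) G⁻¹ b := by
          funext b
          have hlt : (kIdx hk a b).val / l < (i : ℕ) := by rw [hdiv b]; exact a.isLt
          rw [dif_pos hlt]
          have e2 : (⟨(kIdx hk a b).val / l, hlt⟩ : Fin (i : ℕ)) = a := Fin.ext (hdiv b)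
          have e3 : (⟨(kIdx hk a b).val % l, Nat.mod_lt _ (lpos l)⟩ : Fin l) = b :=
            Fin.ext (kIdx_mod hk a b)
          rw [e2, e3]
        rw [e1]
        have e4 : (fun b : Fin l => Matrix.vecMul (fun m' => (ys m').2 a) G⁻¹ b)
            = Matrix.vecMul (fun m' => (ys m').2 a) G⁻¹ := rfl
        rw [e4, vecMul_cancel_left hG]
    · funext j'
      show dite _ _ _ = vs j'
      have hdiv : (kTop hk j').val / l = (i : ℕ) := kTop_div hk j'
      have hlt : ¬ (kTop hk j').val / l < (i : ℕ) := by rw [hdiv]; exact lt_irrefl _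
      rw [dif_neg hlt]
      refine congrArg vs (Fin.ext ?_)
      exact kTop_mod hk j'

end OutE

section SumHelpers

theorem prod_card_mul_sum {ι κ : Type*} [Fintype ι] [DecidableEq ι] [Fintype κ]
    (c : ℝ) (g : ι → κ → ℝ) :
    (∏ m : ι, c * ∑ w : κ, g m w) = c ^ Fintype.card ι * ∑ u : ι → κ, ∏ m, g m (u m) := by
  rw [Finset.prod_mul_distrib, Finset.prod_const, Finset.card_univ, Finset.prod_univ_sum,
    Fintype.piFinset_univ]

theorem ite_mul_pull {α : Type*} [Fintype α] {c : Prop} [Decidable c] (C : ℝ) (f : α → ℝ) :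
    (if c then C * ∑ x : α, f x else 0) = C * ∑ x : α, (if c then f x else 0) := by
  split <;> simp

theorem prod_ite_zero {ι : Type*} [Fintype ι] (p : ι → Prop) [DecidablePred p] (f : ι → ℝ) :
    (∏ m, if p m then f m else 0) = if (∀ m, p m) then ∏ m, f m else 0 := by
  by_cases h : ∀ m, p m
  · rw [if_pos h]
    exact Finset.prod_congr rfl fun m _ => if_pos (h m)
  · rw [if_neg h]
    push_neg at h
    obtain ⟨m₀, hm⟩ := h
    exact Finset.prod_eq_zero (Finset.mem_univ m₀) (if_neg hm)

theorem ite_ite_and {A B : Prop} [Decidable A] [Decidable B] (X : ℝ) :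
    (if A then (if B then X else 0) else 0) = if A ∧ B then X else 0 := by
  by_cases hA : A <;> by_cases hB : B <;> simp [hA, hB]

end SumHelpers

end PolarRec

open PolarRec

/-- recursive structure of the split channels. For `1 ≤ i ≤ l^n`,
`1 ≤ j ≤ l` (here 0-based), the channel `(W_n^{(i)})₁^{(j)}` — one polarization step
with kernel `G` applied to the split channel `W_n^{(i)}` — is equivalent to
`W_{n+1}^{((i−1)l+j)}`: there is a bijection of output alphabets carrying one
transition kernel to the other (hence `I` and `Z` coincide). -/
theorem splitCh_recursive
    {Fq O : Type*} [Field Fq] [Fintype Fq] [Fintype O] {l : ℕ} [NeZero l]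
    (W : Fq → O → ℝ)
    (hW0 : ∀ x y, 0 ≤ W x y) (hW1 : ∀ x, ∑ y, W x y = 1)
    (G : Matrix (Fin l) (Fin l) Fq) (hG : IsUnit G.det)
    (n : ℕ) (i : Fin (l ^ n)) (j : Fin l)
    (k : Fin (l ^ (n + 1))) (hk : (k : ℕ) = (i : ℕ) * l + (j : ℕ)) :
    ∃ e : ((Fin (l ^ (n + 1)) → O) × (Fin k → Fq)) ≃
        ((Fin l → ((Fin (l ^ n) → O) × (Fin i → Fq))) × (Fin j → Fq)),
      ∀ x o, splitCh W (GnMat G (n + 1)) k x o =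
        splitCh (splitCh W (GnMat G n) i) G j x (e o) := by
  classical
  refine ⟨outE O G hG hk, ?_⟩
  intro x o
  simp only [splitCh]
  conv_rhs => simp only [prod_card_mul_sum, Fintype.card_fin, ite_mul_pull]
  conv_rhs => rw [← Finset.mul_sum, ← mul_assoc]
  -- normalize the constant
  have hconst : (1 / (Fintype.card Fq : ℝ) ^ (l - 1)) *
      (1 / (Fintype.card Fq : ℝ) ^ (l ^ n - 1)) ^ l
      = 1 / (Fintype.card Fq : ℝ) ^ (l ^ (n + 1) - 1) := by
    have e : (l - 1) + (l ^ n - 1) * l = l ^ (n + 1) - 1 := by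
      have h1 := lpos l
      have h2 : 0 < l ^ n := pow_pos h1 n
      have h3 : 1 * l ≤ l ^ n * l := Nat.mul_le_mul_right _ h2
      rw [Nat.sub_mul, pow_succ]
      omega
    rw [div_pow, one_pow, ← pow_mul, div_mul_div_comm, one_mul, ← pow_add, e]
  rw [hconst]
  refine congrArg (fun t => 1 / (Fintype.card Fq : ℝ) ^ (l ^ (n + 1) - 1) * t) ?_
  symm
  rw [Finset.sum_comm]
  refine Eq.trans
    (Finset.sum_congr rfl fun u _ =>
      Finset.sum_eq_single (Matrix.vecMul (fun m => u m i) G⁻¹)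
        (fun v _ hne => ?_) (fun h => absurd (Finset.mem_univ _) h)) ?_
  · -- off-support terms vanish
    have hex : ∃ m, ¬ (u m i = ∑ r, v r * G r m) := by
      by_contra hcon
      push_neg at hcon
      apply hne
      have h1 : (fun m => u m i) = Matrix.vecMul v G := funext fun m => hcon m
      rw [h1, vecMul_cancel_right hG]
    obtain ⟨m₀, hm₀⟩ := hex
    have hzero : (∏ m : Fin l,
        if u m i = ∑ r : Fin l, v r * G r m ∧
            ∀ (a : Fin (i : ℕ)), u m (Fin.castLE i.isLt.le a)
              = (((PolarRec.outE O G hG hk) o).1 m).2 a then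
          ∏ K' : Fin (l ^ n),
            W (∑ r : Fin (l ^ n), u m r * GnMat G n r K')
              ((((PolarRec.outE O G hG hk) o).1 m).1 K')
        else 0) = 0 :=
      Finset.prod_eq_zero (Finset.mem_univ m₀) (if_neg fun hc => hm₀ hc.1)
    rw [hzero, ite_self]
  · refine Eq.trans (Equiv.sum_comp (psiEquiv G hG) _).symm
      (Finset.sum_congr rfl fun U _ => ?_)
    have hv0 : Matrix.vecMul (fun m => (psiEquiv G hG) U m i) G⁻¹
        = fun b => U (mkIdx i b) := by
      have h1 : (fun m => (psiEquiv G hG) U m i)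
          = Matrix.vecMul (fun b => U (mkIdx i b)) G := rfl
      rw [h1, vecMul_cancel_right hG]
    show (if Matrix.vecMul (fun m => (psiEquiv G hG) U m i) G⁻¹ j = x ∧ _ then _ else _) = _
    rw [hv0]
    simp only [prod_ite_zero, ite_ite_and]
    have ekk : mkIdx i j = k := Fin.ext hk.symm
    have hval : (∏ m : Fin l, ∏ K' : Fin (l ^ n),
          W (∑ r : Fin (l ^ n), (psiEquiv G hG) U m r * GnMat G n r K')
            ((((outE O G hG hk) o).1 m).1 K'))
        = ∏ K : Fin (l ^ (n + 1)),
            W (∑ r : Fin (l ^ (n + 1)), U r * GnMat G (n + 1) r K) (o.1 K) := by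
      rw [← Equiv.prod_comp (outEquiv l n).symm
        (fun K => W (∑ r, U r * GnMat G (n + 1) r K) (o.1 K)), Fintype.prod_prod_type]
      refine Finset.prod_congr rfl fun m _ => Finset.prod_congr rfl fun K' _ => ?_
      have e1 : (outEquiv l n).symm (m, K') = mkOut m K' := rfl
      rw [e1]
      congr 1
      exact (vecMul_GnMat_succ G U m K').symm
    have hiff : ((U (mkIdx i j) = x ∧
          ∀ j' : Fin (j : ℕ), U (mkIdx i (Fin.castLE j.isLt.le j'))
            = ((outE O G hG hk) o).2 j') ∧
        ∀ m : Fin l, ((psiEquiv G hG) U m i = ∑ b : Fin l, U (mkIdx i b) * G b m ∧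
          ∀ a : Fin (i : ℕ), (psiEquiv G hG) U m (Fin.castLE i.isLt.le a)
            = (((outE O G hG hk) o).1 m).2 a))
        ↔ (U k = x ∧ ∀ R : Fin (k : ℕ), U (Fin.castLE k.isLt.le R) = o.2 R) := by
      constructor
      · rintro ⟨⟨h1, h2⟩, h3⟩
        constructor
        · rw [← ekk]; exact h1
        · intro R
          by_cases hdlt : R.val / l < (i : ℕ)
          · have hpq : ∀ (a : Fin (i : ℕ)) (b : Fin l),
                U (mkIdx (Fin.castLE i.isLt.le a) b) = o.2 (kIdx hk a b) := by
              intro a b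
              have hrow : (fun b => U (mkIdx (Fin.castLE i.isLt.le a) b))
                  = fun b => o.2 (kIdx hk a b) := by
                apply vecMul_inj hG
                funext m
                exact (h3 m).2 a
              exact congrFun hrow b
            have e2 : Fin.castLE k.isLt.le R
                = mkIdx (Fin.castLE i.isLt.le ⟨R.val / l, hdlt⟩)
                    ⟨R.val % l, Nat.mod_lt _ (lpos l)⟩ := by
              apply Fin.ext
              show R.val = R.val / l * l + R.val % l
              have h := Nat.div_add_mod R.val l
              rw [Nat.mul_comm] at h
              omega
            have e3 : kIdx hk ⟨R.val / l, hdlt⟩ ⟨R.val % l, Nat.mod_lt _ (lpos l)⟩ = R := by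
              apply Fin.ext
              show R.val / l * l + R.val % l = R.val
              have h := Nat.div_add_mod R.val l
              rw [Nat.mul_comm] at h
              omega
            rw [e2]
            exact (hpq _ _).trans (congrArg o.2 e3)
          · have hdm := div_mod_top hk R hdlt
            have e2 : kTop hk ⟨R.val % l, hdm.2⟩ = R := by
              apply Fin.ext
              show (i : ℕ) * l + R.val % l = R.val
              have h := Nat.div_add_mod R.val l
              rw [hdm.1, Nat.mul_comm] at h
              omega
            have e4 : Fin.castLE k.isLt.le R
                = mkIdx i (Fin.castLE j.isLt.le ⟨R.val % l, hdm.2⟩) := by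
              apply Fin.ext
              show R.val = (i : ℕ) * l + R.val % l
              have h := Nat.div_add_mod R.val l
              rw [hdm.1, Nat.mul_comm] at h
              omega
            rw [e4]
            exact (h2 ⟨R.val % l, hdm.2⟩).trans (congrArg o.2 e2)
      · rintro ⟨h1, h2⟩
        refine ⟨⟨?_, ?_⟩, ?_⟩
        · rw [ekk]; exact h1
        · intro j'
          have h := h2 (kTop hk j')
          have e4 : Fin.castLE k.isLt.le (kTop hk j')
              = mkIdx i (Fin.castLE j.isLt.le j') := Fin.ext rfl
          rw [e4] at h
          exact h
        · intro m
          refine ⟨rfl, ?_⟩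
          intro a
          have hrow : (fun b => U (mkIdx (Fin.castLE i.isLt.le a) b))
              = fun b => o.2 (kIdx hk a b) := by
            funext b
            have h := h2 (kIdx hk a b)
            have e5 : Fin.castLE k.isLt.le (kIdx hk a b)
                = mkIdx (Fin.castLE i.isLt.le a) b := Fin.ext rfl
            rw [e5] at h
            exact h
          show Matrix.vecMul (fun b => U (mkIdx (Fin.castLE i.isLt.le a) b)) G m
              = Matrix.vecMul (fun b => o.2 (kIdx hk a b)) G m
          rw [hrow]
    rcases Classical.em (U k = x ∧ ∀ R : Fin (k : ℕ), U (Fin.castLE k.isLt.le R) = o.2 R)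
      with hB | hB
    · rw [if_pos (hiff.mpr hB), if_pos hB]
      exact hval
    · rw [if_neg (fun hA => hB (hiff.mp hA)), if_neg hB]
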